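/- (Backward direction of the NP-hardness reduction for Unconstrained 1-near Editing.) If there exists an edit set F ⊆ S_Φ × Q_Φ with |F| ≤ t_Φ = |C|(3|V|−1) such that the edited graph (S_Φ ∪ Q_Φ, E_Φ △ F) admits a nested ordering π of the students with |π(s) − π_Φ(s)| ≤ 1 for every student s, then the 3-CNF formula Φ is satisfiable; in fact, setting each variable v_i true if and only if π(sᵢᵗ) > π(sᵢᶠ) yields a satisfying assignment. -/

import Mathlib

open Finset

/-- The neighborhood of a student `s` in the bipartite graph with edge set `E`. -/
noncomputable def nbhd {S Q : Type*} [Fintype Q] [DecidableEq S] [DecidableEq Q]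
    (E : Finset (S × Q)) (s : S) : Finset Q :=
  Finset.univ.filter fun q => (s, q) ∈ E

/-- The students of the reduction: six students per variable, with roles encoded as
`0 = a`, `1 = b`, `2 = f`, `3 = t`, `4 = c`, `5 = d` (smaller role index = stronger). -/
abbrev Stud (n : ℕ) := Fin n × Fin 6

/-- `s` is strictly stronger than `p` (in the linear ordering `π_Φ`, read from strongest to
weakest): earlier variable, or same variable and stronger role. -/
abbrev Stronger {n : ℕ} (s p : Stud n) : Prop :=
  s.1 < p.1 ∨ (s.1 = p.1 ∧ s.2 < p.2)

/-- `s >_P p` in the partial order `P`: all cross-variable pairs, and within a variable all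
pairs from `a > b > f, b > t, f > c, t > c, c > d` except the incomparable pair `{f, t}`. -/
abbrev Pgt {n : ℕ} (s p : Stud n) : Prop :=
  s.1 < p.1 ∨ (s.1 = p.1 ∧ s.2 < p.2 ∧ ¬((s.2 : ℕ) = 2 ∧ (p.2 : ℕ) = 3))

/-- The questions of the reduction: for each relation `s >_P s'` of `P` there are
`t_Φ + 1` gadget questions (where `t_Φ = m * (3n − 1)`), and for each clause there is one
clause question. -/
abbrev Ques (n m : ℕ) :=
  ({pp : Stud n × Stud n // Pgt pp.1 pp.2} × Fin (m * (3 * n - 1) + 1)) ⊕ Fin m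

/-- Adjacency of the reduction graph `G_Φ`. A gadget question for a relation `s >_P s'` is
adjacent exactly to `s` and to every student strictly stronger than `s` (in particular it is
not adjacent to `s'`). A clause question `q_{c_l}` is adjacent to `sᵢᵗ` if `vᵢ` occurs
positively in `c_l`, to `sᵢᶠ` if `vᵢ` occurs negatively, to `sᵢᶜ` if `vᵢ` does not occur,
and to `sᵢᵇ` and `sᵢᵈ` for every `i`. -/
def adjPhi {n m : ℕ} (clause : Fin m → Fin n → Option Bool)
    (s : Stud n) (q : Ques n m) : Prop :=
  match q with
  | Sum.inl (⟨(p, _), _⟩, _) => s = p ∨ Stronger s p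
  | Sum.inr l =>
      ((s.2 : ℕ) = 3 ∧ clause l s.1 = some true) ∨
      ((s.2 : ℕ) = 2 ∧ clause l s.1 = some false) ∨
      ((s.2 : ℕ) = 4 ∧ clause l s.1 = none) ∨
      (s.2 : ℕ) = 1 ∨ (s.2 : ℕ) = 5

open scoped Classical in
/-- The edge set of the reduction graph `G_Φ`. -/
noncomputable def EPhi {n m : ℕ} (clause : Fin m → Fin n → Option Bool) :
    Finset (Stud n × Ques n m) :=
  Finset.univ.filter fun e => adjPhi clause e.1 e.2


def mism (u v : Bool) : ℕ := if u = v then 0 else 1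

set_option maxHeartbeats 1000000 in
set_option synthInstance.maxHeartbeats 1000000 in
set_option synthInstance.maxSize 2000 in
set_option maxRecDepth 4000 in
lemma blockBool (a0 a1 a2 a3 a4 a5 n2 n3 n4 b23 : Bool)
    (h10 : a1 = true → a0 = true) (h21 : a2 = true → a1 = true)
    (h31 : a3 = true → a1 = true) (h42 : a4 = true → a2 = true)
    (h43 : a4 = true → a3 = true) (h54 : a5 = true → a4 = true)
    (h23 : b23 = true → a2 = true → a3 = true)
    (h32 : b23 = false → a3 = true → a2 = true)
    (htri : (n2 = true ∧ n3 = false ∧ n4 = false) ∨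
            (n2 = false ∧ n3 = true ∧ n4 = false) ∨
            (n2 = false ∧ n3 = false ∧ n4 = true)) :
    2 ≤ mism a0 false + mism a1 true + mism a2 n2 + mism a3 n3 + mism a4 n4 + mism a5 true ∧
    (mism a0 false + mism a1 true + mism a2 n2 + mism a3 n3 + mism a4 n4 + mism a5 true ≤ 2 →
      a0 = true ∧ ((b23 = true ∧ n3 = true) ∨ (b23 = false ∧ n2 = true))) ∧
    (a5 = true →
      3 ≤ mism a0 false + mism a1 true + mism a2 n2 + mism a3 n3 + mism a4 n4 + mism a5 true) := by
  rcases htri with ⟨h2, h3, h4⟩ | ⟨h2, h3, h4⟩ | ⟨h2, h3, h4⟩ <;>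
    subst h2 <;> subst h3 <;> subst h4 <;>
    revert h10 h21 h31 h42 h43 h54 h23 h32 <;>
    revert a0 a1 a2 a3 a4 a5 b23 <;>
    decide

lemma sum_lb {n : ℕ} (hn : 1 ≤ n) (g : Fin n → ℕ) (h2 : ∀ i, 2 ≤ g i)
    (hB : ∀ i j, i ≠ j → 3 ≤ g i ∨ 3 ≤ g j) : 3 * n - 1 ≤ ∑ i, g i := by
  by_cases hall : ∀ i, 3 ≤ g i
  · have h := Finset.card_nsmul_le_sum (univ : Finset (Fin n)) g 3 (fun i _ => hall i)
    rw [card_univ, Fintype.card_fin, smul_eq_mul] at h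
    calc 3 * n - 1 ≤ n * 3 := by omega
    _ ≤ _ := h
  · push_neg at hall
    obtain ⟨i0, hi0⟩ := hall
    rw [← Finset.add_sum_erase _ g (mem_univ i0)]
    have h1 : ∀ j ∈ univ.erase i0, 3 ≤ g j := by
      intro j hj
      rcases hB j i0 (Finset.mem_erase.mp hj).1 with h | h
      · exact h
      · omega
    have h2' := Finset.card_nsmul_le_sum _ g 3 h1
    rw [Finset.card_erase_of_mem (mem_univ i0), card_univ, Fintype.card_fin, smul_eq_mul] at h2'
    calc 3 * n - 1 ≤ 2 + (n - 1) * 3 := by omega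
    _ ≤ _ := Nat.add_le_add (h2 i0) h2'

open scoped Classical in
lemma clause_lb {n m : ℕ} (clause : Fin m → Fin n → Option Bool)
    (F : Finset (Stud n × Ques n m))
    (π : Stud n ≃ Fin (Fintype.card (Stud n)))
    (hP : ∀ s p : Stud n, Pgt s p → π p < π s)
    (l : Fin m)
    (hup : ∀ s s' : Stud n, π s' ≤ π s →
      (s', (Sum.inr l : Ques n m)) ∈ symmDiff (EPhi clause) F →
      (s, (Sum.inr l : Ques n m)) ∈ symmDiff (EPhi clause) F)
    (hn : 1 ≤ n) :
    3 * n - 1 ≤ (F.filter fun e => e.2 = (Sum.inr l : Ques n m)).card ∧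
    ((∀ i : Fin n, clause l i ≠ some (decide (π (i, (2 : Fin 6)) < π (i, (3 : Fin 6))))) →
      3 * n ≤ (F.filter fun e => e.2 = (Sum.inr l : Ques n m)).card) := by
  set G := symmDiff (EPhi clause) F with hGdef
  set q : Ques n m := Sum.inr l with hqdef
  set D : Finset (Stud n) := univ.filter (fun s => (s, q) ∈ F) with hDdef
  -- D injects into the fiber of F over q
  have hDcard : D.card ≤ (F.filter fun e => e.2 = q).card := by
    apply Finset.card_le_card_of_injOn (fun s => (s, q))
    · intro s hs
      rw [hDdef] at hs
      simp only [Finset.mem_coe, mem_filter, mem_univ, true_and] at hs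
      exact Finset.mem_coe.mpr (mem_filter.mpr ⟨hs, rfl⟩)
    · intro a _ b _ h
      exact (Prod.ext_iff.mp h).1
  -- F membership is xor of E and G membership
  have hFiff : ∀ s : Stud n, ((s, q) ∈ F) ↔ ¬(((s, q) ∈ EPhi clause) ↔ ((s, q) ∈ G)) := by
    intro s
    rw [hGdef, Finset.mem_symmDiff]
    tauto
  -- fiberwise count
  have hfib : D.card = ∑ i : Fin n, (D.filter fun s => s.1 = i).card :=
    Finset.card_eq_sum_card_fiberwise (fun s _ => mem_univ s.1)
  set cfun : Fin n → ℕ := fun i => (D.filter fun s => s.1 = i).card with hcdef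
  -- E-membership characterization
  have hEmem : ∀ (i : Fin n) (r : Fin 6), (((i, r), q) ∈ EPhi clause) ↔
      (((r : ℕ) = 3 ∧ clause l i = some true) ∨ ((r : ℕ) = 2 ∧ clause l i = some false) ∨
       ((r : ℕ) = 4 ∧ clause l i = none) ∨ (r : ℕ) = 1 ∨ (r : ℕ) = 5) := by
    intro i r
    simp only [EPhi, mem_filter, mem_univ, true_and, hqdef]
    rfl
  -- block analysis
  have hblk : ∀ i : Fin n,
      2 ≤ cfun i ∧
      (cfun i ≤ 2 → (((i, (0 : Fin 6)), q) ∈ G ∧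
        clause l i = some (decide (π (i, (2 : Fin 6)) < π (i, (3 : Fin 6)))))) ∧
      ((((i, (5 : Fin 6)), q) ∈ G) → 3 ≤ cfun i) := by
    intro i
    -- the filtered block as an image over Fin 6
    have himg : (D.filter fun s => s.1 = i)
        = (univ.filter fun r : Fin 6 => ((i, r) : Stud n) ∈ D).image (fun r => ((i, r) : Stud n)) := by
      ext s
      obtain ⟨s1, s2⟩ := s
      simp only [mem_filter, mem_image, mem_univ, true_and]
      constructor
      · rintro ⟨hs, rfl⟩
        exact ⟨s2, hs, rfl⟩
      · rintro ⟨r, hr, heq⟩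
        cases heq
        exact ⟨hr, rfl⟩
    have hinj : Function.Injective (fun r : Fin 6 => ((i, r) : Stud n)) := by
      intro a b h
      exact (Prod.ext_iff.mp h).2
    have hterm : ∀ r : Fin 6, (if ((i, r) : Stud n) ∈ D then 1 else 0)
        = mism (decide (((i, r), q) ∈ G)) (decide (((i, r), q) ∈ EPhi clause)) := by
      intro r
      have hD' : (((i, r) : Stud n) ∈ D) ↔ ¬(((i, r), q) ∈ EPhi clause ↔ ((i, r), q) ∈ G) := by
        rw [hDdef]
        simp only [mem_filter, mem_univ, true_and]
        exact hFiff _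
      by_cases hEG : ((((i, r), q) ∈ EPhi clause) ↔ (((i, r), q) ∈ G))
      · rw [if_neg (by rw [hD']; exact fun h => h hEG)]
        have : decide (((i, r), q) ∈ G) = decide (((i, r), q) ∈ EPhi clause) :=
          decide_eq_decide.mpr hEG.symm
        simp [mism, this]
      · rw [if_pos (hD'.mpr hEG)]
        have : decide (((i, r), q) ∈ G) ≠ decide (((i, r), q) ∈ EPhi clause) := by
          intro h
          exact hEG (decide_eq_decide.mp h).symm
        simp [mism, this]
    have hci : cfun i = mism (decide (((i, (0:Fin 6)), q) ∈ G)) (decide (((i, (0:Fin 6)), q) ∈ EPhi clause))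
        + mism (decide (((i, (1:Fin 6)), q) ∈ G)) (decide (((i, (1:Fin 6)), q) ∈ EPhi clause))
        + mism (decide (((i, (2:Fin 6)), q) ∈ G)) (decide (((i, (2:Fin 6)), q) ∈ EPhi clause))
        + mism (decide (((i, (3:Fin 6)), q) ∈ G)) (decide (((i, (3:Fin 6)), q) ∈ EPhi clause))
        + mism (decide (((i, (4:Fin 6)), q) ∈ G)) (decide (((i, (4:Fin 6)), q) ∈ EPhi clause))
        + mism (decide (((i, (5:Fin 6)), q) ∈ G)) (decide (((i, (5:Fin 6)), q) ∈ EPhi clause)) := by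
      rw [hcdef]
      simp only
      rw [himg, Finset.card_image_of_injective _ hinj, Finset.card_filter, Fin.sum_univ_six,
        hterm 0, hterm 1, hterm 2, hterm 3, hterm 4, hterm 5]
    -- hypotheses for blockBool
    have himp : ∀ r r' : Fin 6, Pgt ((i, r) : Stud n) ((i, r') : Stud n) →
        (decide (((i, r'), q) ∈ G) = true → decide (((i, r), q) ∈ G) = true) := by
      intro r r' hgt h
      exact decide_eq_true (hup _ _ (hP _ _ hgt).le (of_decide_eq_true h))
    have hpgt : ∀ r r' : Fin 6, r < r' → ¬((r : ℕ) = 2 ∧ (r' : ℕ) = 3) →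
        Pgt ((i, r) : Stud n) ((i, r') : Stud n) := by
      intro r r' h1 h2
      exact Or.inr ⟨rfl, h1, h2⟩
    have h23' : decide (π (i, (2:Fin 6)) < π (i, (3:Fin 6))) = true →
        (decide (((i, (2:Fin 6)), q) ∈ G) = true → decide (((i, (3:Fin 6)), q) ∈ G) = true) := by
      intro hb h
      exact decide_eq_true (hup _ _ (of_decide_eq_true hb).le (of_decide_eq_true h))
    have h32' : decide (π (i, (2:Fin 6)) < π (i, (3:Fin 6))) = false →
        (decide (((i, (3:Fin 6)), q) ∈ G) = true → decide (((i, (2:Fin 6)), q) ∈ G) = true) := by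
      intro hb h
      have : ¬ (π (i, (2:Fin 6)) < π (i, (3:Fin 6))) := of_decide_eq_false hb
      exact decide_eq_true (hup _ _ (not_lt.mp this) (of_decide_eq_true h))
    have htri : (decide (((i, (2:Fin 6)), q) ∈ EPhi clause) = true ∧
                 decide (((i, (3:Fin 6)), q) ∈ EPhi clause) = false ∧
                 decide (((i, (4:Fin 6)), q) ∈ EPhi clause) = false) ∨
                (decide (((i, (2:Fin 6)), q) ∈ EPhi clause) = false ∧
                 decide (((i, (3:Fin 6)), q) ∈ EPhi clause) = true ∧
                 decide (((i, (4:Fin 6)), q) ∈ EPhi clause) = false) ∨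
                (decide (((i, (2:Fin 6)), q) ∈ EPhi clause) = false ∧
                 decide (((i, (3:Fin 6)), q) ∈ EPhi clause) = false ∧
                 decide (((i, (4:Fin 6)), q) ∈ EPhi clause) = true) := by
      rcases hc : clause l i with _ | b
      · refine Or.inr (Or.inr ⟨?_, ?_, ?_⟩) <;>
          simp +decide [hEmem, hc]
      · cases b
        · refine Or.inl ⟨?_, ?_, ?_⟩ <;> simp +decide [hEmem, hc]
        · refine Or.inr (Or.inl ⟨?_, ?_, ?_⟩) <;> simp +decide [hEmem, hc]
    have key := blockBool
      (decide (((i, (0:Fin 6)), q) ∈ G)) (decide (((i, (1:Fin 6)), q) ∈ G))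
      (decide (((i, (2:Fin 6)), q) ∈ G)) (decide (((i, (3:Fin 6)), q) ∈ G))
      (decide (((i, (4:Fin 6)), q) ∈ G)) (decide (((i, (5:Fin 6)), q) ∈ G))
      (decide (((i, (2:Fin 6)), q) ∈ EPhi clause)) (decide (((i, (3:Fin 6)), q) ∈ EPhi clause))
      (decide (((i, (4:Fin 6)), q) ∈ EPhi clause))
      (decide (π (i, (2:Fin 6)) < π (i, (3:Fin 6))))
      (himp 0 1 (hpgt 0 1 (by decide) (by decide)))
      (himp 1 2 (hpgt 1 2 (by decide) (by decide)))
      (himp 1 3 (hpgt 1 3 (by decide) (by decide)))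
      (himp 2 4 (hpgt 2 4 (by decide) (by decide)))
      (himp 3 4 (hpgt 3 4 (by decide) (by decide)))
      (himp 4 5 (hpgt 4 5 (by decide) (by decide)))
      h23' h32' htri
    -- also need the `false/true` fixed values for roles 0,1,5
    have hnb0 : decide (((i, (0:Fin 6)), q) ∈ EPhi clause) = false := by
      simp +decide [hEmem]
    have hnb1 : decide (((i, (1:Fin 6)), q) ∈ EPhi clause) = true := by
      simp +decide [hEmem]
    have hnb5 : decide (((i, (5:Fin 6)), q) ∈ EPhi clause) = true := by
      simp +decide [hEmem]
    rw [hnb0, hnb1, hnb5] at hci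
    rw [← hci] at key
    obtain ⟨k1, k2, k3⟩ := key
    refine ⟨k1, ?_, ?_⟩
    · intro hle
      obtain ⟨ha0, hgood⟩ := k2 hle
      refine ⟨of_decide_eq_true ha0, ?_⟩
      rcases hgood with ⟨hb, hn3⟩ | ⟨hb, hn2⟩
      · have h3' := (hEmem i 3).mp (of_decide_eq_true hn3)
        have : clause l i = some true := by
          simpa +decide using h3'
        rw [this, hb]
      · have h2' := (hEmem i 2).mp (of_decide_eq_true hn2)
        have : clause l i = some false := by
          simpa +decide using h2'
        rw [this, hb]
    · intro h5
      exact k3 (decide_eq_true h5)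
  -- cross-block: at most one cheap block
  have haux : ∀ i j : Fin n, i < j → cfun j ≤ 2 → 3 ≤ cfun i := by
    intro i j hij hcj
    obtain ⟨hj0, _⟩ := (hblk j).2.1 hcj
    have hlt : π ((j, (0 : Fin 6)) : Stud n) < π ((i, (5 : Fin 6)) : Stud n) :=
      hP _ _ (Or.inl hij)
    have h5 : (((i, (5 : Fin 6)) : Stud n), q) ∈ G := hup _ _ hlt.le hj0
    exact (hblk i).2.2 h5
  have hB : ∀ i j : Fin n, i ≠ j → 3 ≤ cfun i ∨ 3 ≤ cfun j := by
    intro i j hne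
    rcases lt_or_gt_of_ne hne with h | h
    · by_cases hcj : 3 ≤ cfun j
      · exact Or.inr hcj
      · exact Or.inl (haux i j h (by omega))
    · by_cases hci : 3 ≤ cfun i
      · exact Or.inl hci
      · exact Or.inr (haux j i h (by omega))
  have hsum : 3 * n - 1 ≤ ∑ i, cfun i :=
    sum_lb hn cfun (fun i => (hblk i).1) hB
  constructor
  · calc 3 * n - 1 ≤ ∑ i, cfun i := hsum
    _ = D.card := hfib.symm
    _ ≤ _ := hDcard
  · intro hunsat
    have hall : ∀ i, 3 ≤ cfun i := by
      intro i
      by_contra hci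
      exact hunsat i ((hblk i).2.1 (by omega)).2
    have h := Finset.card_nsmul_le_sum (univ : Finset (Fin n)) cfun 3 (fun i _ => hall i)
    rw [card_univ, Fintype.card_fin, smul_eq_mul] at h
    calc 3 * n = n * 3 := by ring
    _ ≤ ∑ i, cfun i := h
    _ = D.card := hfib.symm
    _ ≤ _ := hDcard

lemma stronger_iff {n : ℕ} {s p : Stud n} :
    Stronger s p ↔ ((s.1 : ℕ) < p.1 ∨ ((s.1 : ℕ) = p.1 ∧ (s.2 : ℕ) < p.2)) := by
  constructor
  · rintro (h | ⟨h1, h2⟩)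
    · exact Or.inl h
    · exact Or.inr ⟨by rw [h1], h2⟩
  · rintro (h | ⟨h1, h2⟩)
    · exact Or.inl h
    · exact Or.inr ⟨Fin.ext h1, h2⟩

lemma stronger_asymm {n : ℕ} {s p : Stud n} (h : Stronger s p) : ¬ (p = s ∨ Stronger p s) := by
  rintro (rfl | h')
  · rw [stronger_iff] at h; omega
  · rw [stronger_iff] at h h'; omega

lemma gadget {n m : ℕ} {clause : Fin m → Fin n → Option Bool}
    {F : Finset (Stud n × Ques n m)} (hF : F.card ≤ m * (3 * n - 1))
    {π : Stud n ≃ Fin (Fintype.card (Stud n))}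
    (hnested : ∀ s₁ s₂ : Stud n, π s₂ ≤ π s₁ →
      nbhd (symmDiff (EPhi clause) F) s₂ ⊆ nbhd (symmDiff (EPhi clause) F) s₁)
    {s p : Stud n} (hsp : Pgt s p) : π p < π s := by
  classical
  by_contra hlt
  push_neg at hlt
  have hst : Stronger s p := hsp.imp id (fun h => ⟨h.1, h.2.1⟩)
  have hpig : ∃ j : Fin (m * (3 * n - 1) + 1),
      ∀ e ∈ F, e.2 ≠ (Sum.inl (⟨(s, p), hsp⟩, j) : Ques n m) := by
    by_contra hall
    push_neg at hall
    have hmaps : ∀ j ∈ (univ : Finset (Fin (m * (3 * n - 1) + 1))),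
        (Sum.inl (⟨(s, p), hsp⟩, j) : Ques n m) ∈ F.image Prod.snd := by
      intro j _
      obtain ⟨e, he, heq⟩ := hall j
      exact mem_image.mpr ⟨e, he, heq⟩
    have hinj : Set.InjOn (fun j : Fin (m * (3 * n - 1) + 1) =>
        (Sum.inl (⟨(s, p), hsp⟩, j) : Ques n m)) ↑(univ : Finset (Fin (m * (3 * n - 1) + 1))) := by
      intro a _ b _ h
      simpa using h
    have h1 := Finset.card_le_card_of_injOn _ hmaps hinj
    have h2 := Finset.card_image_le (s := F) (f := Prod.snd)
    simp only [card_univ, Fintype.card_fin] at h1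
    omega
  obtain ⟨j, hj⟩ := hpig
  set q : Ques n m := Sum.inl (⟨(s, p), hsp⟩, j) with hqdef
  have hsE : (s, q) ∈ EPhi clause := by
    simp only [EPhi, mem_filter, mem_univ, true_and]
    exact Or.inl rfl
  have hpE : (p, q) ∉ EPhi clause := by
    simp only [EPhi, mem_filter, mem_univ, true_and]
    exact stronger_asymm hst
  have hsG : (s, q) ∈ symmDiff (EPhi clause) F :=
    Finset.mem_symmDiff.mpr (Or.inl ⟨hsE, fun h => hj _ h rfl⟩)
  have hpG : (p, q) ∉ symmDiff (EPhi clause) F := by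
    intro h
    rcases Finset.mem_symmDiff.mp h with ⟨h1, _⟩ | ⟨h1, _⟩
    · exact hpE h1
    · exact hj _ h1 rfl
  have hsub := hnested p s hlt
  have : q ∈ nbhd (symmDiff (EPhi clause) F) s := by
    simpa [nbhd] using hsG
  exact hpG (by simpa [nbhd] using hsub this)

/-- Backward direction of the NP-hardness reduction for Unconstrained 1-near Editing: if
there is an edit set of at most `t_Φ = |C|(3|V|−1)` edges after which the graph admits a
nested student ordering `π` that is 1-near to `π_Φ`, then `Φ` is satisfiable; in fact,
setting each variable `vᵢ` true iff `π(sᵢᵗ) > π(sᵢᶠ)` yields a satisfying assignment. -/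
theorem stmt13 (n m : ℕ) (clause : Fin m → Fin n → Option Bool)
    (h3 : ∀ l : Fin m, (Finset.univ.filter fun i => clause l i ≠ none).card = 3)
    (πΦ : Stud n ≃ Fin (Fintype.card (Stud n)))
    (hπΦ : ∀ p p' : Stud n, πΦ p < πΦ p' ↔ Stronger p' p)
    (F : Finset (Stud n × Ques n m))
    (hF : F.card ≤ m * (3 * n - 1))
    (π : Stud n ≃ Fin (Fintype.card (Stud n)))
    (hnear : ∀ s : Stud n, ((π s : ℤ) - (πΦ s : ℤ)).natAbs ≤ 1)
    (hnested : ∀ s₁ s₂ : Stud n, π s₂ ≤ π s₁ →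
      nbhd (symmDiff (EPhi clause) F) s₂ ⊆ nbhd (symmDiff (EPhi clause) F) s₁) :
    ∀ l : Fin m, ∃ i : Fin n,
      clause l i = some (decide (π (i, (2 : Fin 6)) < π (i, (3 : Fin 6)))) := by

  classical
  intro l
  by_contra hcon
  push_neg at hcon
  have hP : ∀ s p : Stud n, Pgt s p → π p < π s := fun s p h => gadget hF hnested h
  have hn : 1 ≤ n := by
    have h := h3 l
    have hle := Finset.card_filter_le (univ : Finset (Fin n)) (fun i => clause l i ≠ none)
    rw [card_univ, Fintype.card_fin] at hle
    omega
  have hup : ∀ (l' : Fin m) (s s' : Stud n), π s' ≤ π s →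
      (s', (Sum.inr l' : Ques n m)) ∈ symmDiff (EPhi clause) F →
      (s, (Sum.inr l' : Ques n m)) ∈ symmDiff (EPhi clause) F := by
    intro l' s s' hle hmem
    have hsub := hnested s s' hle
    have hq : (Sum.inr l' : Ques n m) ∈ nbhd (symmDiff (EPhi clause) F) s' := by
      simpa [nbhd] using hmem
    simpa [nbhd] using hsub hq
  have hbound : ∀ l' : Fin m,
      3 * n - 1 ≤ (F.filter fun e => e.2 = (Sum.inr l' : Ques n m)).card :=
    fun l' => (clause_lb clause F π hP l' (hup l') hn).1
  have hboundl : 3 * n ≤ (F.filter fun e => e.2 = (Sum.inr l : Ques n m)).card :=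
    (clause_lb clause F π hP l (hup l) hn).2 hcon
  have hsum : ∑ l' : Fin m, (F.filter fun e => e.2 = (Sum.inr l' : Ques n m)).card ≤ F.card := by
    rw [← Finset.card_biUnion]
    · apply Finset.card_le_card
      intro e he
      rcases Finset.mem_biUnion.mp he with ⟨l', _, he'⟩
      exact (mem_filter.mp he').1
    · intro x _ y _ hxy
      simp only [Function.onFun]
      rw [Finset.disjoint_left]
      intro e he1 he2
      have h1 := (mem_filter.mp he1).2
      have h2 := (mem_filter.mp he2).2
      rw [h1] at h2
      exact hxy (Sum.inr.inj h2)
  rw [← Finset.add_sum_erase _ _ (mem_univ l)] at hsum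
  have h2' := Finset.card_nsmul_le_sum (univ.erase l)
    (fun l' => (F.filter fun e => e.2 = (Sum.inr l' : Ques n m)).card) (3 * n - 1)
    (fun l' _ => hbound l')
  rw [Finset.card_erase_of_mem (mem_univ l), card_univ, Fintype.card_fin, smul_eq_mul] at h2'
  have hm : 1 ≤ m := l.pos
  have hexp : m * (3 * n - 1) = (m - 1) * (3 * n - 1) + (3 * n - 1) := by
    cases m with
    | zero => omega
    | succ k => simp [Nat.succ_sub_one, Nat.succ_mul]
  omega
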